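/- For every probability measure F on [0,1] and every bidding strategy s whose induced bid distribution P_{s,F} is absolutely continuous with respect to Lebesgue measure, the map H ↦ Reg_F(s,H) is convex and upper semicontinuous on the space of probability measures on [0,1] equipped with the topology of weak convergence. -/

import Mathlib

open MeasureTheory ProbabilityTheory Set
open Filter Topology

noncomputable section

namespace FPA

/-- The unit interval `[0,1] ⊆ ℝ`. -/
def Iu : Set ℝ := Set.Icc 0 1

/-- `μ` is a probability measure on `[0,1]`. -/
def IsProbOn (μ : Measure ℝ) : Prop := IsProbabilityMeasure μ ∧ μ Iu = 1

/-- A bidding strategy: a Markov kernel from `[0,1]` to `[0,1]`. -/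
def IsStrategy (s : Kernel ℝ ℝ) : Prop := IsMarkovKernel s ∧ ∀ v : ℝ, s v Iu = 1

/-- The buyer's utility `u(b,h;v) = (v−b)·1{b ≥ h}`. -/
def util (b h v : ℝ) : ℝ := (v - b) * (if h ≤ b then 1 else 0)

/-- Expected utility `U_F(s,H)`. -/
def eUtil (F : Measure ℝ) (s : Kernel ℝ ℝ) (H : Measure ℝ) : ℝ :=
  ∫ v, ∫ h, ∫ b, util b h v ∂(s v) ∂H ∂F

/-- Regret `Reg_F(s,H) = sup_{s'∈S} U_F(s',H) − U_F(s,H)`. -/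
def regret (F : Measure ℝ) (s : Kernel ℝ ℝ) (H : Measure ℝ) : ℝ :=
  (⨆ s' : {k : Kernel ℝ ℝ // IsStrategy k}, eUtil F s'.1 H) - eUtil F s H

/-- Induced bid distribution `P_{s,F}`. -/
def bidDist (F : Measure ℝ) (s : Kernel ℝ ℝ) : Measure ℝ := F.bind (fun v => s v)

/-- CDF of a measure on `[0,1]`: `F(x) = F([0,x])`. -/
def cdf01 (F : Measure ℝ) (x : ℝ) : ℝ := (F (Set.Iic x)).toReal

/-- Generalized inverse `F⁻(t) = inf {x ∈ [0,1] : F(x) ≥ t}`. -/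
def qinv (F : Measure ℝ) (t : ℝ) : ℝ := sInf {x | x ∈ Iu ∧ t ≤ cdf01 F x}

/-- Full-information benchmark against a deterministic highest competing bid `h`. -/
def bench (F : Measure ℝ) (h : ℝ) : ℝ := ∫ v, (v - h) * (if h ≤ v then 1 else 0) ∂F

/-- Full-information regret `R_F(s,H)`. -/
def fregret (F : Measure ℝ) (s : Kernel ℝ ℝ) (H : Measure ℝ) : ℝ :=
  (∫ h, bench F h ∂H) - eUtil F s H

/-- Absolute continuity of a function on `[0,1]` (FTC characterization). -/
def AbsContOn01 (f : ℝ → ℝ) : Prop :=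
  ∃ g : ℝ → ℝ, IntervalIntegrable g volume 0 1 ∧
    ∀ x ∈ Iu, f x = f 0 + ∫ t in (0:ℝ)..x, g t

/-- The set of quantiles corresponding to value `v`: `Y(v) = {y ∈ [0,1] : F⁻(y) = v}`. -/
def Yset (F : Measure ℝ) (v : ℝ) : Set ℝ := {y | y ∈ Iu ∧ qinv F y = v}

/-- Uniform distribution on a set `A ⊆ ℝ`. -/
def unifOn (A : Set ℝ) : Measure ℝ := (volume A)⁻¹ • volume.restrict A

/-- `s` is the bidding strategy corresponding to the quantile-based bidding strategy `Q`:
it bids `Q(F(v))` when `F({v}) = 0`, and the pushforward under `Q` of the uniform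
distribution on `Y(v)` when `F({v}) > 0`. -/
def IsQuantileStrategy (F : Measure ℝ) (Q : ℝ → ℝ) (s : Kernel ℝ ℝ) : Prop :=
  IsStrategy s ∧ ∀ v ∈ Iu,
    s v = if F {v} = 0 then Measure.dirac (Q (cdf01 F v)) else (unifOn (Yset F v)).map Q

/-- The candidate worst-case highest-competing-bid CDF
`H*(x) = exp(−∫_{(Q*)⁻¹(x)}^1 dt/(1−F(Q*(t))))`. -/
def Hstar (F : Measure ℝ) (Q : ℝ → ℝ) (x : ℝ) : ℝ :=
  Real.exp (-(∫ t in (Function.invFunOn Q Iu x)..(1:ℝ), 1 / (1 - cdf01 F (Q t))))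








lemma measurableSet_Iu : MeasurableSet Iu := measurableSet_Icc

lemma ae_mem_Iu {μ : Measure ℝ} [IsProbabilityMeasure μ] (h : μ Iu = 1) :
    ∀ᵐ x ∂μ, x ∈ Iu := by
  rw [ae_iff]
  have : μ Iuᶜ = 0 := by
    rw [measure_compl measurableSet_Iu (measure_ne_top μ Iu), h, measure_univ, tsub_self]
  simpa [Set.compl_def] using this

/-- countable sequence in `[0,1]`, dense from the right, containing `1`. -/
def dseq : ℕ → ℝ := fun n =>
  Nat.casesOn n 1 (fun m => min 1 ((m.unpair.1 : ℝ) / (m.unpair.2 + 1)))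

lemma dseq_zero : dseq 0 = 1 := rfl

lemma dseq_mem (n : ℕ) : dseq n ∈ Iu := by
  cases n with
  | zero => exact ⟨zero_le_one, le_refl 1⟩
  | succ m =>
    refine ⟨le_min zero_le_one ?_, min_le_left _ _⟩
    positivity

lemma dseq_dense {x y : ℝ} (hx : 0 ≤ x) (hxy : x < y) (hy : y ≤ 1) :
    ∃ n, x < dseq n ∧ dseq n < y := by
  obtain ⟨m, hm⟩ := exists_nat_one_div_lt (sub_pos.2 hxy)
  set a : ℕ := (⌊x * (m + 1)⌋).toNat + 1 with ha
  have hm1 : (0:ℝ) < (m:ℝ) + 1 := by positivity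
  have hfl : (0:ℤ) ≤ ⌊x * (m + 1)⌋ := Int.floor_nonneg.2 (by positivity)
  have htn : ((⌊x * (m + 1)⌋.toNat : ℕ) : ℝ) = ((⌊x * (m + 1)⌋ : ℤ) : ℝ) := by
    exact_mod_cast congrArg (fun z : ℤ => (z : ℝ)) (Int.toNat_of_nonneg hfl)
  have haR : (a : ℝ) = (⌊x * (m + 1)⌋ : ℝ) + 1 := by
    rw [ha]; push_cast; rw [htn]
  have hgt : x < (a : ℝ) / (m + 1) := by
    rw [lt_div_iff₀ hm1, haR]
    have := Int.lt_floor_add_one (x * (m + 1))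
    linarith
  have hlt : (a : ℝ) / (m + 1) < y := by
    rw [div_lt_iff₀ hm1, haR]
    have h1 := Int.floor_le (x * (m + 1))
    have h2 : (1:ℝ) / (m + 1) < y - x := hm
    rw [div_lt_iff₀ hm1] at h2
    linarith
  refine ⟨Nat.pair a m + 1, ?_, ?_⟩
  · show x < min 1 (((Nat.pair a m).unpair.1 : ℝ) / ((Nat.pair a m).unpair.2 + 1))
    rw [Nat.unpair_pair]
    exact lt_min (lt_of_lt_of_le hxy hy) hgt
  · show min 1 (((Nat.pair a m).unpair.1 : ℝ) / ((Nat.pair a m).unpair.2 + 1)) < y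
    rw [Nat.unpair_pair]
    exact lt_of_le_of_lt (min_le_right _ _) hlt

def gfun (H : Measure ℝ) (v : ℝ) : ℝ := ⨆ n, (v - dseq n) * cdf01 H (dseq n)

lemma cdf01_nonneg (H : Measure ℝ) (x : ℝ) : 0 ≤ cdf01 H x := ENNReal.toReal_nonneg

lemma cdf01_le_one (H : Measure ℝ) [IsProbabilityMeasure H] (x : ℝ) : cdf01 H x ≤ 1 := by
  have := prob_le_one (μ := H) (s := Set.Iic x)
  simpa [cdf01] using ENNReal.toReal_le_of_le_ofReal zero_le_one (by simpa using this)

lemma cdf01_mono (H : Measure ℝ) [IsFiniteMeasure H] {x y : ℝ} (h : x ≤ y) :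
    cdf01 H x ≤ cdf01 H y :=
  ENNReal.toReal_mono (measure_ne_top H _) (measure_mono (Set.Iic_subset_Iic.2 h))

lemma measurable_cdf01 (H : Measure ℝ) [IsFiniteMeasure H] : Measurable (cdf01 H) :=
  Monotone.measurable (fun _ _ h => cdf01_mono H h)

lemma term_le_abs (H : Measure ℝ) [IsProbabilityMeasure H] (v b : ℝ) (hb : b ∈ Iu) :
    (v - b) * cdf01 H b ≤ |v| := by
  rcases le_or_gt (v - b) 0 with h | h
  · exact le_trans (mul_nonpos_of_nonpos_of_nonneg h (cdf01_nonneg H b)) (abs_nonneg v)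
  · calc (v - b) * cdf01 H b ≤ (v - b) * 1 := by
          exact mul_le_mul_of_nonneg_left (cdf01_le_one H b) h.le
    _ = v - b := mul_one _
    _ ≤ v := by linarith [hb.1]
    _ ≤ |v| := le_abs_self v

lemma gfun_bddAbove (H : Measure ℝ) [IsProbabilityMeasure H] (v : ℝ) :
    BddAbove (Set.range fun n => (v - dseq n) * cdf01 H (dseq n)) := by
  refine ⟨|v|, ?_⟩
  rintro x ⟨n, rfl⟩
  exact term_le_abs H v (dseq n) (dseq_mem n)

lemma gfun_le (H : Measure ℝ) [IsProbabilityMeasure H] {v c : ℝ}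
    (h : ∀ n, (v - dseq n) * cdf01 H (dseq n) ≤ c) : gfun H v ≤ c := ciSup_le h

lemma term_le_gfun (H : Measure ℝ) [IsProbabilityMeasure H] (v : ℝ) (n : ℕ) :
    (v - dseq n) * cdf01 H (dseq n) ≤ gfun H v :=
  le_ciSup (gfun_bddAbove H v) n

lemma cdf01_right_cont (H : Measure ℝ) [IsFiniteMeasure H] (b : ℝ) {ε : ℝ} (hε : 0 < ε) :
    ∃ δ : ℝ, 0 < δ ∧ δ < ε ∧ cdf01 H (b + δ) < cdf01 H b + ε := by
  have hiInter : ⋂ k : ℕ, Set.Iic (b + 1 / (k + 1)) = Set.Iic b := by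
    ext x
    simp only [Set.mem_iInter, Set.mem_Iic]
    constructor
    · intro h
      by_contra hx
      push_neg at hx
      obtain ⟨k, hk⟩ := exists_nat_one_div_lt (sub_pos.2 hx)
      have := h k
      push_cast at hk ⊢
      linarith
    · intro h k
      have : (0:ℝ) < 1 / (k + 1) := by positivity
      linarith
  have htend : Tendsto (fun k : ℕ => H (Set.Iic (b + 1 / (k + 1)))) atTop (𝓝 (H (Set.Iic b))) := by
    have := tendsto_measure_iInter_atTop (μ := H)
      (s := fun k : ℕ => Set.Iic (b + 1 / (k + 1)))
      (fun k => measurableSet_Iic.nullMeasurableSet)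
      (fun i j hij => Set.Iic_subset_Iic.2 (by
        have : (1:ℝ) / (j + 1) ≤ 1 / (i + 1) := by
          apply one_div_le_one_div_of_le (by positivity)
          push_cast
          have : (i:ℝ) ≤ j := Nat.cast_le.2 hij
          linarith
        linarith))
      ⟨0, measure_ne_top H _⟩
    rw [hiInter] at this
    exact this
  have htendR : Tendsto (fun k : ℕ => cdf01 H (b + 1 / (k + 1))) atTop (𝓝 (cdf01 H b)) :=
    (ENNReal.tendsto_toReal (measure_ne_top H _)).comp htend
  have hev : ∀ᶠ k : ℕ in atTop, cdf01 H (b + 1 / (k + 1)) < cdf01 H b + ε :=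
    htendR.eventually_lt_const (by linarith)
  obtain ⟨k, hk1⟩ := hev.exists
  obtain ⟨k', hk'⟩ := exists_nat_one_div_lt hε
  refine ⟨1 / (max k k' + 1), by positivity, ?_, ?_⟩
  · have h1 : (1:ℝ) / (max k k' + 1) ≤ 1 / (k' + 1) := by
      apply one_div_le_one_div_of_le (by positivity)
      have : (k':ℝ) ≤ max k k' := Nat.cast_le.2 (le_max_right _ _)
      linarith
    linarith
  · have h2 : cdf01 H (b + 1 / (max k k' + 1)) ≤ cdf01 H (b + 1 / (k + 1)) := by
      apply ENNReal.toReal_mono (measure_ne_top H _)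
      apply measure_mono (Set.Iic_subset_Iic.2 ?_)
      have : (1:ℝ) / (max k k' + 1) ≤ 1 / (k + 1) := by
        apply one_div_le_one_div_of_le (by positivity)
        have : (k:ℝ) ≤ max k k' := Nat.cast_le.2 (le_max_left _ _)
        linarith
      linarith
    linarith

lemma le_gfun (H : Measure ℝ) [IsProbabilityMeasure H] {v b : ℝ} (hb : b ∈ Iu) :
    (v - b) * cdf01 H b ≤ gfun H v := by
  rcases eq_or_lt_of_le hb.2 with h1 | h1
  · subst h1
    have := term_le_gfun H v 0
    rwa [dseq_zero] at this
  · refine le_of_forall_pos_le_add (fun ε hε => ?_)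
    set ε' : ℝ := ε / (|v| + 2) with hε'
    have hε'pos : 0 < ε' := by positivity
    obtain ⟨δ, hδpos, hδlt, hδ⟩ := cdf01_right_cont H b hε'pos
    obtain ⟨n, hn1, hn2⟩ := dseq_dense hb.1 (lt_min (lt_add_of_pos_right b hδpos)
      h1 : b < min (b + δ) 1) (min_le_right _ _)
    set q := dseq n with hq
    have hq1 : q < b + δ := lt_of_lt_of_le hn2 (min_le_left _ _)
    have hCq1 : cdf01 H q ≤ cdf01 H (b + δ) := cdf01_mono H hq1.le
    have hCq2 : cdf01 H b ≤ cdf01 H q := cdf01_mono H hn1.le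
    have hkey : (v - b) * cdf01 H b ≤ (v - q) * cdf01 H q + ε := by
      have habs : |v - b| ≤ |v| + 1 := by
        have := abs_sub_abs_le_abs_sub v b -- not quite; do direct
        have h2 : |v - b| ≤ |v| + |b| := abs_sub v b
        have h3 : |b| ≤ 1 := abs_le.2 ⟨by linarith [hb.1], hb.2⟩
        linarith
      have hC : cdf01 H q - cdf01 H b ≤ ε' := by linarith
      have e1 : (v - b) * cdf01 H b - (v - q) * cdf01 H q
          = (v - b) * (cdf01 H b - cdf01 H q) + (q - b) * cdf01 H q := by ring
      have e2 : (v - b) * (cdf01 H b - cdf01 H q) ≤ (|v| + 1) * ε' := by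
        calc (v - b) * (cdf01 H b - cdf01 H q) ≤ |(v - b) * (cdf01 H b - cdf01 H q)| :=
              le_abs_self _
        _ = |v - b| * |cdf01 H b - cdf01 H q| := abs_mul _ _
        _ ≤ (|v| + 1) * ε' := by
            apply mul_le_mul habs _ (abs_nonneg _) (by positivity)
            rw [abs_sub_comm, abs_of_nonneg (by linarith)]
            exact hC
      have e3 : (q - b) * cdf01 H q ≤ ε' := by
        have : q - b ≤ ε' := by linarith
        have hC1 : cdf01 H q ≤ 1 := cdf01_le_one H q
        nlinarith [cdf01_nonneg H q, sub_nonneg.2 hn1.le]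
      have e4 : (|v| + 1) * ε' + ε' ≤ ε := by
        have he : (|v| + 1) * ε' + ε' = ε := by
          rw [hε']
          field_simp
          ring
        linarith
      linarith
    have hqIu : q ∈ Iu := dseq_mem n
    exact le_trans hkey (by linarith [term_le_gfun H v n])

lemma gfun_nonneg (H : Measure ℝ) [IsProbabilityMeasure H] {v : ℝ} (hv : 0 ≤ v) :
    0 ≤ gfun H v := by
  have h0 : (0:ℝ) ∈ Iu := ⟨le_refl 0, zero_le_one⟩
  have := le_gfun H (v := v) h0
  have h1 : 0 ≤ (v - 0) * cdf01 H 0 := mul_nonneg (by linarith) (cdf01_nonneg H 0)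
  linarith

lemma gfun_le_abs (H : Measure ℝ) [IsProbabilityMeasure H] (v : ℝ) : gfun H v ≤ |v| :=
  gfun_le H (fun n => term_le_abs H v (dseq n) (dseq_mem n))

lemma abs_gfun_le (H : Measure ℝ) [IsProbabilityMeasure H] (v : ℝ) : |gfun H v| ≤ |v| + 1 := by
  rw [abs_le]
  constructor
  · have := term_le_gfun H v 0
    rw [dseq_zero] at this
    have h1 : -(|v| + 1) ≤ (v - 1) * cdf01 H 1 := by
      have hC0 : 0 ≤ cdf01 H 1 := cdf01_nonneg H 1
      have hC1 : cdf01 H 1 ≤ 1 := cdf01_le_one H 1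
      have hv1 : -(|v| + 1) ≤ v - 1 := by
        have := neg_abs_le v
        linarith
      have habs0 := abs_nonneg v
      rcases le_or_gt 0 (v - 1) with h | h
      · have := mul_nonneg h hC0
        linarith
      · have h2 : (v - 1) * 1 ≤ (v - 1) * cdf01 H 1 := mul_le_mul_of_nonpos_left hC1 h.le
        linarith
    linarith
  · linarith [gfun_le_abs H v, abs_nonneg v]

lemma gfun_le_one (H : Measure ℝ) [IsProbabilityMeasure H] {v : ℝ} (hv : v ∈ Iu) :
    gfun H v ≤ 1 := le_trans (gfun_le_abs H v) (by rw [abs_of_nonneg hv.1]; exact hv.2)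

lemma measurable_gfun (H : Measure ℝ) [IsProbabilityMeasure H] : Measurable (gfun H) := by
  apply measurable_of_Ioi
  intro c
  have : (gfun H) ⁻¹' (Set.Ioi c) = ⋃ n, {v : ℝ | c < (v - dseq n) * cdf01 H (dseq n)} := by
    ext v
    simp only [Set.mem_preimage, Set.mem_Ioi, Set.mem_iUnion, Set.mem_setOf_eq]
    constructor
    · intro h
      exact (lt_ciSup_iff (gfun_bddAbove H v)).1 h
    · rintro ⟨n, hn⟩
      exact lt_of_lt_of_le hn (term_le_gfun H v n)
  rw [this]
  apply MeasurableSet.iUnion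
  intro n
  have : Measurable fun v : ℝ => (v - dseq n) * cdf01 H (dseq n) :=
    (measurable_id.sub measurable_const).mul measurable_const
  exact measurableSet_lt measurable_const this











lemma measurable_util_hb (v : ℝ) : Measurable fun q : ℝ × ℝ => util q.2 q.1 v := by
  unfold util
  apply Measurable.mul
  · exact (measurable_const.sub measurable_snd)
  · exact Measurable.ite (measurableSet_le measurable_fst measurable_snd)
      measurable_const measurable_const

lemma stronglyMeasurable_util_joint :
    StronglyMeasurable fun p : (ℝ × ℝ) × ℝ => util p.2 p.1.2 p.1.1 := by
  apply Measurable.stronglyMeasurable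
  unfold util
  apply Measurable.mul
  · exact (measurable_fst.fst.sub measurable_snd)
  · exact Measurable.ite (measurableSet_le measurable_fst.snd measurable_snd)
      measurable_const measurable_const

lemma abs_util_le {b h v : ℝ} (hb : b ∈ Iu) : ‖util b h v‖ ≤ |v| + 1 := by
  unfold util
  rw [Real.norm_eq_abs, abs_mul]
  have h1 : |if h ≤ b then (1:ℝ) else 0| ≤ 1 := by
    split <;> simp
  have h2 : |v - b| ≤ |v| + 1 := by
    have h3 : |v - b| ≤ |v| + |b| := abs_sub v b
    have h4 : |b| ≤ 1 := abs_le.2 ⟨by linarith [hb.1], hb.2⟩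
    linarith
  calc |v - b| * |if h ≤ b then (1:ℝ) else 0| ≤ (|v| + 1) * 1 :=
        mul_le_mul h2 h1 (abs_nonneg _) (by positivity)
  _ = |v| + 1 := mul_one _

section strategy

variable {s' : Kernel ℝ ℝ}

lemma strat_prob (hs' : IsStrategy s') (v : ℝ) : IsProbabilityMeasure (s' v) := by
  haveI := hs'.1
  infer_instance

lemma strat_ae_Iu (hs' : IsStrategy s') (v : ℝ) : ∀ᵐ b ∂(s' v), b ∈ Iu := by
  haveI := strat_prob hs' v
  exact ae_mem_Iu (hs'.2 v)

/-- inner integral over bids -/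
lemma abs_inner_le (hs' : IsStrategy s') (v h : ℝ) : ‖∫ b, util b h v ∂(s' v)‖ ≤ |v| + 1 := by
  haveI := strat_prob hs' v
  have h1 : ∀ᵐ b ∂(s' v), ‖util b h v‖ ≤ |v| + 1 := by
    filter_upwards [strat_ae_Iu hs' v] with b hb
    exact abs_util_le hb
  calc ‖∫ b, util b h v ∂(s' v)‖ ≤ (|v| + 1) * ((s' v) Set.univ).toReal :=
        norm_integral_le_of_norm_le_const h1
  _ = |v| + 1 := by simp

lemma measurable_inner (hs' : IsStrategy s') (v : ℝ) : Measurable fun h => ∫ b, util b h v ∂(s' v) := by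
  haveI := hs'.1
  have h2 : StronglyMeasurable fun q : ℝ × ℝ => util q.2 q.1 v :=
    stronglyMeasurable_util_joint.comp_measurable
      (((measurable_const (a := v)).prodMk measurable_fst).prodMk measurable_snd)
  have h3 := h2.integral_prod_right' (ν := s' v)
  exact h3.measurable

lemma integrable_inner (hs' : IsStrategy s') (H : Measure ℝ) [IsFiniteMeasure H] (v : ℝ) :
    Integrable (fun h => ∫ b, util b h v ∂(s' v)) H := by
  refine Integrable.mono' (integrable_const (|v| + 1))
    (measurable_inner hs' v).aestronglyMeasurable ?_
  exact Filter.Eventually.of_forall fun h => abs_inner_le hs' v h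

/-- joint strong measurability of `(v,h) ↦ ∫ b, util b h v ∂(s' v)` -/
lemma stronglyMeasurable_phi (hs' : IsStrategy s') :
    StronglyMeasurable fun p : ℝ × ℝ => ∫ b, util b p.2 p.1 ∂(s' p.1) := by
  haveI := hs'.1
  have h1 : StronglyMeasurable fun p : (ℝ × ℝ) × ℝ => util p.2 p.1.2 p.1.1 :=
    stronglyMeasurable_util_joint
  have h2 := h1.integral_kernel_prod_right' (κ := s'.comap Prod.fst measurable_fst)
  simp only [Kernel.comap_apply] at h2
  exact h2

lemma measurable_Phi (hs' : IsStrategy s') (H : Measure ℝ) [IsFiniteMeasure H] :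
    Measurable fun v => ∫ h, ∫ b, util b h v ∂(s' v) ∂H := by
  have := (stronglyMeasurable_phi hs').integral_prod_right' (ν := H)
  exact this.measurable

lemma abs_Phi_le (hs' : IsStrategy s') (H : Measure ℝ) [IsProbabilityMeasure H] (v : ℝ) :
    ‖∫ h, ∫ b, util b h v ∂(s' v) ∂H‖ ≤ |v| + 1 := by
  calc ‖∫ h, ∫ b, util b h v ∂(s' v) ∂H‖ ≤ (|v| + 1) * (H Set.univ).toReal :=
        norm_integral_le_of_norm_le_const
          (Filter.Eventually.of_forall fun h => abs_inner_le hs' v h)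
  _ = |v| + 1 := by simp

lemma integrable_Phi (hs' : IsStrategy s') (F H : Measure ℝ) [IsProbabilityMeasure F] [IsProbabilityMeasure H]
    (hFIu : F Iu = 1) :
    Integrable (fun v => ∫ h, ∫ b, util b h v ∂(s' v) ∂H) F := by
  refine Integrable.mono' (integrable_const 2)
    (measurable_Phi hs' H).aestronglyMeasurable ?_
  filter_upwards [ae_mem_Iu hFIu] with v hv
  have h1 := abs_Phi_le hs' H v
  have h2 : |v| ≤ 1 := abs_le.2 ⟨by linarith [hv.1], hv.2⟩
  calc ‖∫ h, ∫ b, util b h v ∂(s' v) ∂H‖ ≤ |v| + 1 := h1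
  _ ≤ 2 := by linarith

/-- Fubini: the `h`-then-`b` integral equals `∫ b, (v-b) * cdf01 H b`. -/
lemma swap_eq (hs' : IsStrategy s') (H : Measure ℝ) [IsProbabilityMeasure H] (v : ℝ) :
    ∫ h, ∫ b, util b h v ∂(s' v) ∂H = ∫ b, (v - b) * cdf01 H b ∂(s' v) := by
  haveI := strat_prob hs' v
  have hint : Integrable (Function.uncurry fun h b => util b h v) (H.prod (s' v)) := by
    refine Integrable.mono' (integrable_const (|v| + 1))
      (measurable_util_hb v).aestronglyMeasurable ?_
    have hnull : (H.prod (s' v)) {q : ℝ × ℝ | q.2 ∉ Iu} = 0 := by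
      have hsub : {q : ℝ × ℝ | q.2 ∉ Iu} ⊆ Set.univ ×ˢ Iuᶜ := by
        intro q hq; exact ⟨trivial, hq⟩
      refine measure_mono_null hsub ?_
      rw [Measure.prod_prod]
      have : (s' v) Iuᶜ = 0 := by
        rw [measure_compl measurableSet_Iu (measure_ne_top _ _), hs'.2 v, measure_univ,
          tsub_self]
      rw [this, mul_zero]
    rw [ae_iff]
    refine measure_mono_null ?_ hnull
    intro q hq
    simp only [Set.mem_setOf_eq] at hq ⊢
    intro hmem
    exact hq (abs_util_le hmem)
  have h1 := integral_integral_swap hint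
  rw [show (∫ h, ∫ b, util b h v ∂(s' v) ∂H) = ∫ h, ∫ b, (fun h b => util b h v) h b ∂(s' v) ∂H
    from rfl, h1]
  congr 1
  ext b
  unfold util cdf01
  have : (∫ h, (v - b) * (if h ≤ b then (1:ℝ) else 0) ∂H)
      = (v - b) * ∫ h, (if h ≤ b then (1:ℝ) else 0) ∂H := integral_const_mul _ _
  rw [this]
  congr 1
  have hind : (fun h => if h ≤ b then (1:ℝ) else 0) = (Set.Iic b).indicator (fun _ => (1:ℝ)) := by
    ext h
    simp [Set.indicator_apply, Set.mem_Iic]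
  rw [hind]
  rw [integral_indicator_const (1:ℝ) measurableSet_Iic]
  simp [Measure.real]

end strategy

lemma integral_util_h (H : Measure ℝ) [IsFiniteMeasure H] (b v : ℝ) :
    ∫ h, util b h v ∂H = (v - b) * cdf01 H b := by
  unfold util cdf01
  rw [integral_const_mul _ _]
  congr 1
  have hind : (fun h => if h ≤ b then (1:ℝ) else 0) = (Set.Iic b).indicator (fun _ => (1:ℝ)) := by
    ext h
    simp [Set.indicator_apply, Set.mem_Iic]
  rw [hind, integral_indicator_const (1:ℝ) measurableSet_Iic]
  simp [Measure.real]

lemma integrable_gfun (F H : Measure ℝ) [IsProbabilityMeasure F] [IsProbabilityMeasure H]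
    (hFIu : F Iu = 1) : Integrable (gfun H) F := by
  refine Integrable.mono' (integrable_const 2) (measurable_gfun H).aestronglyMeasurable ?_
  filter_upwards [ae_mem_Iu hFIu] with v hv
  have h1 := abs_gfun_le H v
  have h2 : |v| ≤ 1 := abs_le.2 ⟨by linarith [hv.1], hv.2⟩
  rw [Real.norm_eq_abs]
  linarith

lemma eUtil_le_integral_gfun (F : Measure ℝ) [IsProbabilityMeasure F] (hFIu : F Iu = 1)
    (H : Measure ℝ) [IsProbabilityMeasure H] {s' : Kernel ℝ ℝ} (hs' : IsStrategy s') :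
    eUtil F s' H ≤ ∫ v, gfun H v ∂F := by
  unfold eUtil
  have hPhi_le : ∀ v, (∫ h, ∫ b, util b h v ∂(s' v) ∂H) ≤ gfun H v := by
    intro v
    rw [swap_eq hs' H v]
    haveI := strat_prob hs' v
    have hint : Integrable (fun b => (v - b) * cdf01 H b) (s' v) := by
      refine Integrable.mono' (integrable_const (|v| + 1))
        ((measurable_const.sub measurable_id).mul (measurable_cdf01 H)).aestronglyMeasurable ?_
      filter_upwards [strat_ae_Iu hs' v] with b hb
      rw [Real.norm_eq_abs, abs_mul]
      have h4 : |b| ≤ 1 := abs_le.2 ⟨by linarith [hb.1], hb.2⟩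
      have h5 : |cdf01 H b| ≤ 1 := by
        rw [abs_of_nonneg (cdf01_nonneg H b)]; exact cdf01_le_one H b
      have h3 : |v - b| ≤ |v| + 1 := by have := abs_sub v b; linarith
      nlinarith [abs_nonneg (v - b), abs_nonneg (cdf01 H b)]
    have h6 := integral_mono_ae hint (integrable_const (gfun H v)) (by
      filter_upwards [strat_ae_Iu hs' v] with b hb
      exact le_gfun H hb)
    simpa using h6
  exact integral_mono_ae (integrable_Phi hs' F H hFIu) (integrable_gfun F H hFIu)
    (Filter.Eventually.of_forall hPhi_le)

/-- the constant-bid-one strategy, to witness nonemptiness -/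
def stratOne : Kernel ℝ ℝ := Kernel.deterministic (fun _ => 1) measurable_const

lemma isStrategy_stratOne : IsStrategy stratOne := by
  constructor
  · exact Kernel.isMarkovKernel_deterministic measurable_const
  · intro v
    rw [stratOne, Kernel.deterministic_apply, Measure.dirac_apply' _ measurableSet_Iu]
    simp [Set.indicator_apply, Iu, Set.mem_Icc]

instance : Nonempty {k : Kernel ℝ ℝ // IsStrategy k} := ⟨⟨stratOne, isStrategy_stratOne⟩⟩

lemma exists_strategy_ge (F : Measure ℝ) [IsProbabilityMeasure F] (hFIu : F Iu = 1)
    (H : Measure ℝ) [IsProbabilityMeasure H] {ε : ℝ} (hε : 0 < ε) :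
    ∃ s' : Kernel ℝ ℝ, IsStrategy s' ∧ (∫ v, gfun H v ∂F) - ε ≤ eUtil F s' H := by
  classical
  have hex : ∀ v : ℝ, ∃ n, gfun H v - ε < (v - dseq n) * cdf01 H (dseq n) := by
    intro v
    exact exists_lt_of_lt_ciSup (by linarith [le_refl (gfun H v)] : gfun H v - ε < gfun H v)
  set N : ℝ → ℕ := fun v => Nat.find (hex v) with hNdef
  have hN : ∀ v, gfun H v - ε < (v - dseq (N v)) * cdf01 H (dseq (N v)) := fun v =>
    Nat.find_spec (hex v)
  have hNmeas : Measurable N := by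
    apply measurable_find
    intro n
    exact measurableSet_lt ((measurable_gfun H).sub measurable_const)
      ((measurable_id.sub measurable_const).mul measurable_const)
  set bfun : ℝ → ℝ := fun v => dseq (N v) with hbdef
  have hbmeas : Measurable bfun := measurable_from_top.comp hNmeas
  refine ⟨Kernel.deterministic bfun hbmeas, ⟨Kernel.isMarkovKernel_deterministic hbmeas, ?_⟩, ?_⟩
  · intro v
    rw [Kernel.deterministic_apply, Measure.dirac_apply' _ measurableSet_Iu]
    have := dseq_mem (N v)
    simp [Set.indicator_apply, hbdef, this]
  · have heval : eUtil F (Kernel.deterministic bfun hbmeas) H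
        = ∫ v, (v - bfun v) * cdf01 H (bfun v) ∂F := by
      unfold eUtil
      congr 1
      ext v
      rw [Kernel.deterministic_apply]
      have : ∀ h : ℝ, (∫ b, util b h v ∂(Measure.dirac (bfun v))) = util (bfun v) h v :=
        fun h => integral_dirac _ _
      simp_rw [this]
      exact integral_util_h H (bfun v) v
    rw [heval]
    have hmono : ∫ v, (gfun H v - ε) ∂F ≤ ∫ v, (v - bfun v) * cdf01 H (bfun v) ∂F := by
      apply integral_mono_ae
      · exact (integrable_gfun F H hFIu).sub (integrable_const ε)
      · refine Integrable.mono' (integrable_const 2) ?_ ?_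
        · exact ((measurable_id.sub hbmeas).mul
            ((measurable_cdf01 H).comp hbmeas)).aestronglyMeasurable
        · filter_upwards [ae_mem_Iu hFIu] with v hv
          rw [Real.norm_eq_abs, abs_mul]
          have hb := dseq_mem (N v)
          have h4 : |bfun v| ≤ 1 := abs_le.2 ⟨by linarith [hb.1], hb.2⟩
          have h2 : |v| ≤ 1 := abs_le.2 ⟨by linarith [hv.1], hv.2⟩
          have h3 : |v - bfun v| ≤ 2 := by have := abs_sub v (bfun v); linarith
          have h5 : |cdf01 H (bfun v)| ≤ 1 := by
            rw [abs_of_nonneg (cdf01_nonneg H _)]; exact cdf01_le_one H _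
          nlinarith [abs_nonneg (v - bfun v), abs_nonneg (cdf01 H (bfun v))]
      · exact Filter.Eventually.of_forall (fun v => (hN v).le)
    have hconst : ∫ v, (gfun H v - ε) ∂F = (∫ v, gfun H v ∂F) - ε := by
      rw [integral_sub (integrable_gfun F H hFIu) (integrable_const ε), integral_const]
      simp
    linarith

lemma bddAbove_eUtil (F : Measure ℝ) [IsProbabilityMeasure F] (hFIu : F Iu = 1)
    (H : Measure ℝ) [IsProbabilityMeasure H] :
    BddAbove (Set.range fun s' : {k : Kernel ℝ ℝ // IsStrategy k} => eUtil F s'.1 H) := by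
  refine ⟨∫ v, gfun H v ∂F, ?_⟩
  rintro x ⟨s', rfl⟩
  exact eUtil_le_integral_gfun F hFIu H s'.2

lemma iSup_eUtil_eq (F : Measure ℝ) [IsProbabilityMeasure F] (hFIu : F Iu = 1)
    (H : Measure ℝ) [IsProbabilityMeasure H] :
    (⨆ s' : {k : Kernel ℝ ℝ // IsStrategy k}, eUtil F s'.1 H) = ∫ v, gfun H v ∂F := by
  apply le_antisymm
  · exact ciSup_le (fun s' => eUtil_le_integral_gfun F hFIu H s'.2)
  · refine le_of_forall_pos_le_add (fun ε hε => ?_)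
    obtain ⟨s', hstrat, hge⟩ := exists_strategy_ge F hFIu H hε
    have := le_ciSup (bddAbove_eUtil F hFIu H) (⟨s', hstrat⟩ : {k : Kernel ℝ ℝ // IsStrategy k})
    simp only at this
    linarith

section convex

variable {θ : ℝ} (H₁ H₂ : Measure ℝ)

lemma mix_prob [IsProbabilityMeasure H₁] [IsProbabilityMeasure H₂] (h0 : 0 ≤ θ) (h1 : θ ≤ 1) :
    IsProbabilityMeasure (ENNReal.ofReal θ • H₁ + ENNReal.ofReal (1 - θ) • H₂) := by
  constructor
  rw [Measure.add_apply, Measure.smul_apply, Measure.smul_apply, measure_univ, measure_univ,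
    smul_eq_mul, smul_eq_mul, mul_one, mul_one, ← ENNReal.ofReal_add h0 (by linarith)]
  norm_num

lemma cdf01_mix [IsFiniteMeasure H₁] [IsFiniteMeasure H₂] (h0 : 0 ≤ θ) (h1 : θ ≤ 1) (x : ℝ) :
    cdf01 (ENNReal.ofReal θ • H₁ + ENNReal.ofReal (1 - θ) • H₂) x
      = θ * cdf01 H₁ x + (1 - θ) * cdf01 H₂ x := by
  unfold cdf01
  rw [Measure.add_apply, Measure.smul_apply, Measure.smul_apply, smul_eq_mul, smul_eq_mul,
    ENNReal.toReal_add (by finiteness) (by finiteness), ENNReal.toReal_mul, ENNReal.toReal_mul,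
    ENNReal.toReal_ofReal h0, ENNReal.toReal_ofReal (by linarith)]

lemma gfun_mix_le [IsProbabilityMeasure H₁] [IsProbabilityMeasure H₂]
    (h0 : 0 ≤ θ) (h1 : θ ≤ 1) (v : ℝ) :
    gfun (ENNReal.ofReal θ • H₁ + ENNReal.ofReal (1 - θ) • H₂) v
      ≤ θ * gfun H₁ v + (1 - θ) * gfun H₂ v := by
  haveI := mix_prob H₁ H₂ h0 h1
  apply gfun_le
  intro n
  rw [cdf01_mix H₁ H₂ h0 h1]
  have t1 := term_le_gfun H₁ v n
  have t2 := term_le_gfun H₂ v n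
  nlinarith

lemma eUtil_mix {s' : Kernel ℝ ℝ} (hs' : IsStrategy s') (F : Measure ℝ)
    [IsProbabilityMeasure F] (hFIu : F Iu = 1)
    [IsProbabilityMeasure H₁] [IsProbabilityMeasure H₂] (h0 : 0 ≤ θ) (h1 : θ ≤ 1) :
    eUtil F s' (ENNReal.ofReal θ • H₁ + ENNReal.ofReal (1 - θ) • H₂)
      = θ * eUtil F s' H₁ + (1 - θ) * eUtil F s' H₂ := by
  haveI := mix_prob H₁ H₂ h0 h1
  unfold eUtil
  have hinner : ∀ v, ∫ h, ∫ b, util b h v ∂(s' v) ∂(ENNReal.ofReal θ • H₁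
        + ENNReal.ofReal (1 - θ) • H₂)
      = θ * (∫ h, ∫ b, util b h v ∂(s' v) ∂H₁)
        + (1 - θ) * (∫ h, ∫ b, util b h v ∂(s' v) ∂H₂) := by
    intro v
    rw [integral_add_measure
        ((integrable_inner hs' H₁ v).smul_measure ENNReal.ofReal_ne_top)
        ((integrable_inner hs' H₂ v).smul_measure ENNReal.ofReal_ne_top),
      integral_smul_measure, integral_smul_measure,
      ENNReal.toReal_ofReal h0, ENNReal.toReal_ofReal (by linarith : (0:ℝ) ≤ 1 - θ)]
    simp [smul_eq_mul]
  rw [show (∫ v, ∫ h, ∫ b, util b h v ∂(s' v) ∂(ENNReal.ofReal θ • H₁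
      + ENNReal.ofReal (1 - θ) • H₂) ∂F)
    = ∫ v, (θ * (∫ h, ∫ b, util b h v ∂(s' v) ∂H₁)
        + (1 - θ) * (∫ h, ∫ b, util b h v ∂(s' v) ∂H₂)) ∂F from by
      congr 1; ext v; exact hinner v]
  rw [integral_add ((integrable_Phi hs' F H₁ hFIu).const_mul θ)
    ((integrable_Phi hs' F H₂ hFIu).const_mul (1 - θ)),
    integral_const_mul, integral_const_mul]

end convex

lemma regret_convex (F : Measure ℝ) (hF : IsProbOn F) {s : Kernel ℝ ℝ} (hs : IsStrategy s)
    (H₁ H₂ : Measure ℝ) (h₁ : IsProbOn H₁) (h₂ : IsProbOn H₂) (θ : ℝ) (h0 : 0 ≤ θ) (h1 : θ ≤ 1) :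
    regret F s (ENNReal.ofReal θ • H₁ + ENNReal.ofReal (1 - θ) • H₂)
      ≤ θ * regret F s H₁ + (1 - θ) * regret F s H₂ := by
  haveI := hF.1; haveI := h₁.1; haveI := h₂.1
  haveI := mix_prob H₁ H₂ h0 h1
  unfold regret
  rw [iSup_eUtil_eq F hF.2 H₁, iSup_eUtil_eq F hF.2 H₂, iSup_eUtil_eq F hF.2 _,
    eUtil_mix H₁ H₂ hs F hF.2 h0 h1]
  have key : (∫ v, gfun (ENNReal.ofReal θ • H₁ + ENNReal.ofReal (1 - θ) • H₂) v ∂F)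
      ≤ θ * (∫ v, gfun H₁ v ∂F) + (1 - θ) * (∫ v, gfun H₂ v ∂F) := by
    have h3 := integral_mono_ae (integrable_gfun F _ hF.2)
      (((integrable_gfun F H₁ hF.2).const_mul θ).add
        ((integrable_gfun F H₂ hF.2).const_mul (1 - θ)))
      (Filter.Eventually.of_forall (gfun_mix_le H₁ H₂ h0 h1))
    simp only [Pi.add_apply] at h3
    rwa [integral_add ((integrable_gfun F H₁ hF.2).const_mul θ)
      ((integrable_gfun F H₂ hF.2).const_mul (1 - θ)),
      integral_const_mul, integral_const_mul] at h3
  linarith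

section usc

lemma gfun_le_of_grid (H₀ H : Measure ℝ) [IsProbabilityMeasure H₀] [IsProbabilityMeasure H]
    {m : ℕ} (hm : 0 < m) {ε : ℝ} (hε : 0 < ε)
    (hgrid : ∀ j ≤ m, cdf01 H ((j : ℝ) / m) < cdf01 H₀ ((j : ℝ) / m) + ε)
    {v : ℝ} (hv : v ∈ Iu) :
    gfun H v ≤ gfun H₀ v + (1 / m + ε) := by
  have hmR : (0:ℝ) < m := Nat.cast_pos.2 hm
  apply gfun_le
  intro n
  set b := dseq n with hbdef
  have hb := dseq_mem n
  have hg0 : 0 ≤ gfun H₀ v := gfun_nonneg H₀ hv.1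
  rcases le_or_gt v b with hvb | hvb
  · have h1 : (v - b) * cdf01 H b ≤ 0 :=
      mul_nonpos_of_nonpos_of_nonneg (by linarith) (cdf01_nonneg H b)
    have h2 : (0:ℝ) < 1 / m + ε := by positivity
    linarith
  · set j := ⌈b * m⌉₊ with hjdef
    have hjle : j ≤ m := Nat.ceil_le.2 (by nlinarith [hb.2])
    set t : ℝ := (j : ℝ) / m with htdef
    have hbt : b ≤ t := by
      rw [htdef, le_div_iff₀ hmR]
      exact Nat.le_ceil (b * m)
    have htb : t ≤ b + 1 / m := by
      rw [htdef, div_le_iff₀ hmR]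
      have := Nat.ceil_lt_add_one (mul_nonneg hb.1 hmR.le)
      have hexp : (b + 1 / m) * m = b * m + 1 := by field_simp
      rw [hexp]
      exact this.le
    have htIu : t ∈ Iu := by
      constructor
      · rw [htdef]
        positivity
      · rw [htdef, div_le_one hmR]
        exact_mod_cast hjle
    have hC1 : cdf01 H b ≤ cdf01 H t := cdf01_mono H hbt
    have hC2 : cdf01 H t < cdf01 H₀ t + ε := hgrid j hjle
    have hle := le_gfun H₀ (v := v) htIu
    have hvb1 : v - b ≤ 1 := by linarith [hv.2, hb.1]
    have hC0 : 0 ≤ cdf01 H₀ t := cdf01_nonneg H₀ t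
    have hC01 : cdf01 H₀ t ≤ 1 := cdf01_le_one H₀ t
    -- (v-b) * cdf01 H b ≤ (v-b) * (cdf01 H₀ t + ε) ≤ (v-t) cdf + (t-b) + (v-b) ε
    have step1 : (v - b) * cdf01 H b ≤ (v - b) * (cdf01 H₀ t + ε) := by
      apply mul_le_mul_of_nonneg_left _ (by linarith)
      linarith
    have step2 : (v - b) * (cdf01 H₀ t + ε)
        = (v - t) * cdf01 H₀ t + (t - b) * cdf01 H₀ t + (v - b) * ε := by ring
    have step3 : (t - b) * cdf01 H₀ t ≤ 1 / m := by
      nlinarith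
    have step4 : (v - b) * ε ≤ ε := by nlinarith
    linarith

lemma eventually_cdf01_lt (H₀ : ProbabilityMeasure ℝ) {L : Filter (ProbabilityMeasure ℝ)}
    (hL : Tendsto (id : ProbabilityMeasure ℝ → ProbabilityMeasure ℝ) L (𝓝 H₀))
    (t : ℝ) {ε : ℝ} (hε : 0 < ε) :
    ∀ᶠ H : ProbabilityMeasure ℝ in L, cdf01 H.toMeasure t < cdf01 H₀.toMeasure t + ε := by
  have hlimsup := ProbabilityMeasure.limsup_measure_closed_le_of_tendsto hL
    (isClosed_Iic (a := t))
  have hlt : (L.limsup fun H : ProbabilityMeasure ℝ => (H : Measure ℝ) (Set.Iic t))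
      < (H₀ : Measure ℝ) (Set.Iic t) + ENNReal.ofReal ε :=
    lt_of_le_of_lt hlimsup (ENNReal.lt_add_right (measure_ne_top _ _)
      (by simpa using (ENNReal.ofReal_pos.2 hε).ne'))
  have hev := Filter.eventually_lt_of_limsup_lt hlt
  filter_upwards [hev] with H hH
  have hfin1 : (H : Measure ℝ) (Set.Iic t) ≠ ⊤ := measure_ne_top _ _
  have hfin2 : (H₀ : Measure ℝ) (Set.Iic t) + ENNReal.ofReal ε ≠ ⊤ := by
    exact ENNReal.add_ne_top.2 ⟨measure_ne_top _ _, ENNReal.ofReal_ne_top⟩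
  have := ENNReal.toReal_lt_toReal hfin1 hfin2 |>.2 hH
  rwa [ENNReal.toReal_add (measure_ne_top _ _) ENNReal.ofReal_ne_top,
    ENNReal.toReal_ofReal hε.le] at this

lemma eventually_integral_gfun_lt (F : Measure ℝ) [IsProbabilityMeasure F] (hFIu : F Iu = 1)
    (H₀ : ProbabilityMeasure ℝ) {L : Filter (ProbabilityMeasure ℝ)}
    (hL : Tendsto (id : ProbabilityMeasure ℝ → ProbabilityMeasure ℝ) L (𝓝 H₀))
    {c : ℝ} (hc : (∫ v, gfun H₀.toMeasure v ∂F) < c) :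
    ∀ᶠ H : ProbabilityMeasure ℝ in L, (∫ v, gfun H.toMeasure v ∂F) < c := by
  set η : ℝ := c - ∫ v, gfun H₀.toMeasure v ∂F with hηdef
  have hη : 0 < η := by rw [hηdef]; linarith
  obtain ⟨m, hm⟩ := exists_nat_one_div_lt (show 0 < η / 3 by linarith)
  set m1 := m + 1 with hm1def
  have hm1 : 0 < m1 := Nat.succ_pos m
  have hm1R : (1:ℝ) / m1 < η / 3 := by
    rw [hm1def]; push_cast; push_cast at hm; exact hm
  have hgrid : ∀ᶠ H : ProbabilityMeasure ℝ in L, ∀ j ∈ Finset.range (m1 + 1),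
      cdf01 H.toMeasure ((j : ℝ) / m1) < cdf01 H₀.toMeasure ((j : ℝ) / m1) + η / 3 := by
    rw [Filter.eventually_all_finset]
    intro j _
    exact eventually_cdf01_lt H₀ hL _ (by linarith)
  filter_upwards [hgrid] with H hH
  have hgrid' : ∀ j ≤ m1, cdf01 H.toMeasure ((j : ℝ) / m1)
      < cdf01 H₀.toMeasure ((j : ℝ) / m1) + η / 3 := by
    intro j hj
    exact hH j (Finset.mem_range.2 (Nat.lt_succ_of_le hj))
  have hpoint : ∀ᵐ v ∂F, gfun H.toMeasure v ≤ gfun H₀.toMeasure v + (1 / m1 + η / 3) := by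
    filter_upwards [ae_mem_Iu hFIu] with v hv
    exact gfun_le_of_grid H₀.toMeasure H.toMeasure hm1 (by linarith) hgrid' hv
  have hmono := integral_mono_ae (integrable_gfun F H.toMeasure hFIu)
    ((integrable_gfun F H₀.toMeasure hFIu).add (integrable_const (1 / m1 + η / 3))) hpoint
  have heq : ∫ v, (gfun H₀.toMeasure v + (1 / m1 + η / 3)) ∂F
      = (∫ v, gfun H₀.toMeasure v ∂F) + (1 / m1 + η / 3) := by
    rw [integral_add (integrable_gfun F H₀.toMeasure hFIu) (integrable_const _), integral_const]
    simp
  simp only [Pi.add_apply] at hmono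
  rw [heq] at hmono
  have : (1:ℝ) / m1 + η / 3 < η := by linarith
  linarith



def psi (F : Measure ℝ) (s : Kernel ℝ ℝ) (h : ℝ) : ℝ := ∫ v, ∫ b, util b h v ∂(s v) ∂F

section psi

variable {F : Measure ℝ} {s : Kernel ℝ ℝ}

lemma F_compl_null [IsProbabilityMeasure F] (hFIu : F Iu = 1) : F Iuᶜ = 0 := by
  rw [measure_compl measurableSet_Iu (measure_ne_top _ _), hFIu, measure_univ, tsub_self]

lemma abs_psi_le (hs : IsStrategy s) [IsProbabilityMeasure F] (hFIu : F Iu = 1) (h : ℝ) :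
    ‖psi F s h‖ ≤ 2 := by
  have h1 : ∀ᵐ v ∂F, ‖∫ b, util b h v ∂(s v)‖ ≤ 2 := by
    filter_upwards [ae_mem_Iu hFIu] with v hv
    have h2 : |v| ≤ 1 := abs_le.2 ⟨by linarith [hv.1], hv.2⟩
    have := abs_inner_le hs v h
    linarith
  calc ‖psi F s h‖ ≤ 2 * (F Set.univ).toReal := norm_integral_le_of_norm_le_const h1
  _ = 2 := by simp

lemma eUtil_eq_integral_psi (hs : IsStrategy s) [IsProbabilityMeasure F] (hFIu : F Iu = 1)
    (H : Measure ℝ) [IsProbabilityMeasure H] :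
    eUtil F s H = ∫ h, psi F s h ∂H := by
  unfold eUtil psi
  have hint : Integrable (Function.uncurry fun v h => ∫ b, util b h v ∂(s v)) (F.prod H) := by
    refine Integrable.mono' (integrable_const 2)
      (stronglyMeasurable_phi hs).aestronglyMeasurable ?_
    have hnull : (F.prod H) {p : ℝ × ℝ | p.1 ∉ Iu} = 0 := by
      have hsub : {p : ℝ × ℝ | p.1 ∉ Iu} ⊆ Iuᶜ ×ˢ Set.univ := fun p hp => ⟨hp, trivial⟩
      refine measure_mono_null hsub ?_
      rw [Measure.prod_prod, F_compl_null hFIu, zero_mul]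
    have hb : ∀ᵐ p : ℝ × ℝ ∂(F.prod H), p.1 ∈ Iu := by
      rw [ae_iff]
      exact measure_mono_null (fun p hp => hp) hnull
    filter_upwards [hb] with p hp
    have h2 : |p.1| ≤ 1 := abs_le.2 ⟨by linarith [hp.1], hp.2⟩
    have h3 := abs_inner_le hs p.1 p.2
    show ‖∫ b, util b p.2 p.1 ∂(s p.1)‖ ≤ 2
    linarith
  exact integral_integral_swap hint

lemma continuous_psi (hs : IsStrategy s) [IsProbabilityMeasure F] (hFIu : F Iu = 1)
    (hac : bidDist F s ≪ volume) : Continuous (psi F s) := by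
  haveI := hs.1
  haveI hMprob : IsProbabilityMeasure (F ⊗ₘ s) := by
    constructor
    rw [Measure.compProd_apply_univ]
    exact measure_univ
  have hmeasz : ∀ h : ℝ, Measurable fun z : ℝ × ℝ => util z.2 h z.1 := by
    intro h
    unfold util
    exact (measurable_fst.sub measurable_snd).mul
      (Measurable.ite (measurableSet_le measurable_const measurable_snd) measurable_const
        measurable_const)
  have haeIu : ∀ᵐ z : ℝ × ℝ ∂(F ⊗ₘ s), z.1 ∈ Iu ∧ z.2 ∈ Iu := by
    have h1 : (F ⊗ₘ s) (Iuᶜ ×ˢ Set.univ) = 0 := by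
      rw [Measure.compProd_apply_prod measurableSet_Iu.compl MeasurableSet.univ]
      have : ∀ a : ℝ, s a Set.univ = 1 := fun a => measure_univ
      simp only [this]
      rw [setLIntegral_one, F_compl_null hFIu]
    have h2 : (F ⊗ₘ s) (Set.univ ×ˢ Iuᶜ) = 0 := by
      rw [Measure.compProd_apply_prod MeasurableSet.univ measurableSet_Iu.compl]
      have : ∀ a : ℝ, s a Iuᶜ = 0 := by
        intro a
        haveI := strat_prob hs a
        rw [measure_compl measurableSet_Iu (measure_ne_top _ _), hs.2 a, measure_univ, tsub_self]
      simp [this]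
    rw [ae_iff]
    refine measure_mono_null ?_ (measure_union_null h1 h2)
    intro z hz
    simp only [Set.mem_setOf_eq, not_and_or] at hz
    rcases hz with hz | hz
    · exact Or.inl ⟨hz, trivial⟩
    · exact Or.inr ⟨trivial, hz⟩
  have hbound : ∀ h : ℝ, ∀ᵐ z : ℝ × ℝ ∂(F ⊗ₘ s), ‖util z.2 h z.1‖ ≤ 2 := by
    intro h
    filter_upwards [haeIu] with z hz
    have h1 := abs_util_le (b := z.2) (h := h) (v := z.1) hz.2
    have h2 : |z.1| ≤ 1 := abs_le.2 ⟨by linarith [hz.1.1], hz.1.2⟩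
    linarith
  have hint : ∀ h : ℝ, Integrable (fun z : ℝ × ℝ => util z.2 h z.1) (F ⊗ₘ s) := fun h =>
    Integrable.mono' (integrable_const 2) (hmeasz h).aestronglyMeasurable (hbound h)
  have hrep : ∀ h : ℝ, psi F s h = ∫ z : ℝ × ℝ, util z.2 h z.1 ∂(F ⊗ₘ s) := by
    intro h
    rw [Measure.integral_compProd (hint h)]
    rfl
  have hsnd : ∀ x : ℝ, (F ⊗ₘ s) {z : ℝ × ℝ | z.2 = x} = 0 := by
    intro x
    have hbid : bidDist F s {x} = 0 := hac (Real.volume_singleton)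
    rw [bidDist, Measure.bind_apply (measurableSet_singleton x)
      (Kernel.measurable s).aemeasurable] at hbid
    have hset : {z : ℝ × ℝ | z.2 = x} = Prod.snd ⁻¹' {x} := rfl
    rw [hset, Measure.compProd_apply (measurable_snd (measurableSet_singleton x))]
    simp only [show ∀ a : ℝ, Prod.mk a ⁻¹' (Prod.snd ⁻¹' {x}) = ({x} : Set ℝ) from fun a => rfl]; exact hbid
  rw [continuous_iff_continuousAt]
  intro h₀
  have hlim : ∀ᵐ z : ℝ × ℝ ∂(F ⊗ₘ s),
      Filter.Tendsto (fun h => util z.2 h z.1) (𝓝 h₀) (𝓝 (util z.2 h₀ z.1)) := by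
    have hne : ∀ᵐ z : ℝ × ℝ ∂(F ⊗ₘ s), z.2 ≠ h₀ := by
      rw [ae_iff]
      refine measure_mono_null ?_ (hsnd h₀)
      intro z hz
      simpa using hz
    filter_upwards [hne] with z hz
    have hev : ∀ᶠ h in 𝓝 h₀, util z.2 h z.1 = util z.2 h₀ z.1 := by
      rcases lt_or_gt_of_ne hz with hlt | hlt
      · have hmem := isOpen_Ioi.eventually_mem (show h₀ ∈ Set.Ioi z.2 from hlt)
        filter_upwards [hmem] with h hh
        unfold util
        rw [if_neg (not_le.2 hh), if_neg (not_le.2 hlt)]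
      · have hmem := isOpen_Iio.eventually_mem (show h₀ ∈ Set.Iio z.2 from hlt)
        filter_upwards [hmem] with h hh
        unfold util
        rw [if_pos (le_of_lt hh), if_pos (le_of_lt hlt)]
    have hev' : (fun _ : ℝ => util z.2 h₀ z.1) =ᶠ[𝓝 h₀] fun h => util z.2 h z.1 := by
      filter_upwards [hev] with h hh
      exact hh.symm
    exact Filter.Tendsto.congr' hev' tendsto_const_nhds
  have hfin := tendsto_integral_filter_of_dominated_convergence (μ := F ⊗ₘ s)
    (bound := fun _ => 2)
    (Filter.Eventually.of_forall (fun h => (hmeasz h).aestronglyMeasurable))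
    (Filter.Eventually.of_forall hbound) (integrable_const 2) hlim
  rw [ContinuousAt, hrep h₀]
  exact hfin.congr (fun h => (hrep h).symm)

end psi

lemma regret_usc (F : Measure ℝ) (hF : IsProbOn F) {s : Kernel ℝ ℝ} (hs : IsStrategy s)
    (hac : bidDist F s ≪ volume) :
    UpperSemicontinuousOn (fun H : ProbabilityMeasure ℝ => regret F s H.toMeasure)
      {H : ProbabilityMeasure ℝ | H.toMeasure Iu = 1} := by
  haveI := hF.1
  intro H₀ hH₀S c hc
  simp only at hc
  have hrep : ∀ H : ProbabilityMeasure ℝ, regret F s H.toMeasure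
      = (∫ v, gfun H.toMeasure v ∂F) - ∫ h, psi F s h ∂H.toMeasure := by
    intro H
    unfold regret
    rw [iSup_eUtil_eq F hF.2 H.toMeasure, eUtil_eq_integral_psi hs hF.2 H.toMeasure]
  rw [hrep H₀] at hc
  set G0 : ℝ := ∫ v, gfun H₀.toMeasure v ∂F with hG0
  set P0 : ℝ := ∫ h, psi F s h ∂H₀.toMeasure with hP0
  set η : ℝ := (c - (G0 - P0)) / 2 with hηdef
  have hη : 0 < η := by rw [hηdef]; linarith
  have hLten : Filter.Tendsto (id : ProbabilityMeasure ℝ → ProbabilityMeasure ℝ)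
      (𝓝[{H : ProbabilityMeasure ℝ | H.toMeasure Iu = 1}] H₀) (𝓝 H₀) :=
    tendsto_id'.2 nhdsWithin_le_nhds
  have h1 := eventually_integral_gfun_lt F hF.2 H₀ hLten (show G0 < G0 + η by linarith)
  have hψ : Continuous (psi F s) := continuous_psi hs hF.2 hac
  set ψb : BoundedContinuousFunction ℝ ℝ :=
    BoundedContinuousFunction.ofNormedAddCommGroup (psi F s) hψ 2 (abs_psi_le hs hF.2) with hψb
  have hcont : Continuous fun H : ProbabilityMeasure ℝ => ∫ h, ψb h ∂H.toMeasure :=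
    ProbabilityMeasure.continuous_integral_boundedContinuousFunction ψb
  have hcoe : ∀ H : ProbabilityMeasure ℝ, (∫ h, ψb h ∂H.toMeasure)
      = ∫ h, psi F s h ∂H.toMeasure := fun H => rfl
  have h2 : ∀ᶠ H : ProbabilityMeasure ℝ
      in 𝓝[{H : ProbabilityMeasure ℝ | H.toMeasure Iu = 1}] H₀,
      P0 - η < ∫ h, psi F s h ∂H.toMeasure := by
    have htd : Filter.Tendsto (fun H : ProbabilityMeasure ℝ => ∫ h, ψb h ∂H.toMeasure)
        (𝓝 H₀) (𝓝 (∫ h, ψb h ∂H₀.toMeasure)) := hcont.continuousAt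
    have hlt : P0 - η < ∫ h, ψb h ∂H₀.toMeasure := by
      rw [hcoe H₀, ← hP0]; linarith
    have hev := htd.eventually_const_lt hlt
    have hev2 : ∀ᶠ H : ProbabilityMeasure ℝ
        in 𝓝[{H : ProbabilityMeasure ℝ | H.toMeasure Iu = 1}] H₀,
        P0 - η < ∫ h, ψb h ∂H.toMeasure := nhdsWithin_le_nhds hev
    filter_upwards [hev2] with H hH
    rwa [hcoe H] at hH
  filter_upwards [h1, h2] with H hH1 hH2
  show regret F s H.toMeasure < c
  rw [hrep H]
  rw [hηdef] at hH1 hH2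
  linarith

end usc


/-- regret is convex and upper semicontinuous in `H`: for a value
distribution `F` on `[0,1]` and a strategy `s` with absolutely continuous induced bid
distribution, the map `H ↦ Reg_F(s,H)` is convex on probability measures supported on
`[0,1]`, and upper semicontinuous on the set of probability measures on `[0,1]` inside the
space of probability measures equipped with the topology of weak convergence. -/
theorem regret_convex_upper_semicontinuous
    (F : Measure ℝ) (hF : IsProbOn F) (s : Kernel ℝ ℝ) (hs : IsStrategy s)
    (hac : bidDist F s ≪ volume) :
    (∀ H₁ H₂ : Measure ℝ, IsProbOn H₁ → IsProbOn H₂ → ∀ θ : ℝ, 0 ≤ θ → θ ≤ 1 →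
      regret F s (ENNReal.ofReal θ • H₁ + ENNReal.ofReal (1 - θ) • H₂)
        ≤ θ * regret F s H₁ + (1 - θ) * regret F s H₂)
    ∧ UpperSemicontinuousOn (fun H : ProbabilityMeasure ℝ => regret F s H.toMeasure)
        {H : ProbabilityMeasure ℝ | H.toMeasure Iu = 1} := by
  constructor
  · intro H₁ H₂ h₁ h₂ θ h0 h1
    exact regret_convex F hF hs H₁ H₂ h₁ h₂ θ h0 h1
  · exact regret_usc F hF hs hac

end FPA
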